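/- Fix n ∈ ℕ. For p, p' ∈ 𝒫, x, y ∈ Punc(n, p) and x', y' ∈ Punc(n, p'): the composition E^n_p(x, y) ∘ E^n_{p'}(x', y') is empty if p ≠ p', is empty if p = p' and y ≠ x', and equals E^n_p(x, y') if p = p' and y = x'; moreover the transpose of E^n_p(x, y) is E^n_p(y, x). -/

import Mathlib

open Metric Set Pointwise

noncomputable section

/-- Points of `ℝ^d`. -/
abbrev Pt (d : ℕ) := EuclideanSpace ℝ (Fin d)

/-- A (possibly labelled) tile in `ℝ^d`: a subset of `ℝ^d` together with a label. -/
structure Tile (d : ℕ) where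
  carrier : Set (Pt d)
  label : ℕ

instance {d : ℕ} : Inhabited (Tile d) := ⟨⟨∅, 0⟩⟩

/-- Translate of a tile by a vector. -/
def Tile.translate {d : ℕ} (t : Tile d) (x : Pt d) : Tile d :=
  ⟨(fun y => y + x) '' t.carrier, t.label⟩

/-- A tile proper: homeomorphic to the closed unit ball. -/
def Tile.IsTile {d : ℕ} (t : Tile d) : Prop :=
  Nonempty (t.carrier ≃ₜ (Metric.closedBall (0 : Pt d) 1))

/-- Support of a partial tiling: the union of its tiles. -/
def psupp {d : ℕ} (P : Set (Tile d)) : Set (Pt d) := ⋃ t ∈ P, t.carrier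

/-- `tilesAt P U` = the tiles of `P` meeting `U`, written `P(U)` in the paper. -/
def tilesAt {d : ℕ} (P : Set (Tile d)) (U : Set (Pt d)) : Set (Tile d) :=
  {t ∈ P | (t.carrier ∩ U).Nonempty}

/-- Translate of a collection of tiles. -/
def translateSet {d : ℕ} (P : Set (Tile d)) (x : Pt d) : Set (Tile d) :=
  (fun t => t.translate x) '' P

/-- A partial tiling: tiles with pairwise disjoint interiors. -/
def IsPartialTiling {d : ℕ} (P : Set (Tile d)) : Prop :=
  (∀ t ∈ P, t.IsTile) ∧
  ∀ t ∈ P, ∀ t' ∈ P, t ≠ t' → interior t.carrier ∩ interior t'.carrier = ∅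

/-- A patch: a finite partial tiling. -/
def IsPatch {d : ℕ} (P : Set (Tile d)) : Prop := IsPartialTiling P ∧ P.Finite

/-- A tiling of all of `ℝ^d`. -/
def IsTilingOfSpace {d : ℕ} (P : Set (Tile d)) : Prop :=
  IsPartialTiling P ∧ psupp P = univ

/-- A substitution tiling system `(𝒫, ω)` with inflation constant `λ > 1`. -/
structure SubstSystem (d : ℕ) where
  proto : Set (Tile d)
  proto_finite : proto.Finite
  proto_nonempty : proto.Nonempty
  proto_isTile : ∀ p ∈ proto, p.IsTile
  proto_zero_mem : ∀ p ∈ proto, (0 : Pt d) ∈ interior p.carrier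
  proto_no_translate : ∀ p ∈ proto, ∀ q ∈ proto, ∀ x : Pt d,
    q = p.translate x → p = q ∧ x = 0
  lam : ℝ
  one_lt_lam : 1 < lam
  sub : Tile d → Set (Tile d)
  sub_patch : ∀ p ∈ proto, IsPatch (sub p)
  sub_proto : ∀ p ∈ proto, ∀ t ∈ sub p, ∃ q ∈ proto, ∃ x : Pt d, t = q.translate x
  sub_supp : ∀ p ∈ proto, psupp (sub p) = lam • p.carrier
  sub_translate : ∀ (t : Tile d) (x : Pt d),
    sub (t.translate x) = (fun s => s.translate (lam • x)) '' sub t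

namespace SubstSystem

variable {d : ℕ} (S : SubstSystem d)

/-- Tile-wise application of the substitution to a collection of tiles. -/
def subSet (P : Set (Tile d)) : Set (Tile d) := ⋃ t ∈ P, S.sub t

/-- Iterated substitution `ω^n` on collections of tiles. -/
def subIter (n : ℕ) (P : Set (Tile d)) : Set (Tile d) := (S.subSet)^[n] P

/-- `ω^n(t)` for a single tile `t`. -/
def omegan (n : ℕ) (t : Tile d) : Set (Tile d) := S.subIter n {t}

/-- The continuous hull `Ω`. -/
def Omega : Set (Set (Tile d)) :=
  {T | IsTilingOfSpace T ∧ ∀ P : Set (Tile d), P ⊆ T → IsPatch P →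
    ∃ n : ℕ, ∃ p ∈ S.proto, ∃ x : Pt d, P ⊆ translateSet (S.omegan n p) x}

/-- `x` is the puncture of the tile `t`, i.e. `t = p + x` for a prototile `p`. -/
def IsPuncture (t : Tile d) (x : Pt d) : Prop :=
  ∃ p ∈ S.proto, t = p.translate x

open Classical in
/-- The puncture `x(t)` of a tile `t` (chosen; unique for translates of prototiles). -/
def punc (t : Tile d) : Pt d :=
  if h : ∃ x : Pt d, S.IsPuncture t x then h.choose else 0

/-- The punctured hull (transversal) `Ω_punc`. -/
def OmegaPunc : Set (Set (Tile d)) :=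
  {T ∈ S.Omega | ∃ t ∈ T, S.IsPuncture t 0}

end SubstSystem

/-- The tiling metric. -/
def tilingDist {d : ℕ} (T T' : Set (Tile d)) : ℝ :=
  sInf ({1} ∪ {ε : ℝ | 0 < ε ∧ ∃ x x' : Pt d, ‖x‖ < ε ∧ ‖x'‖ < ε ∧
    tilesAt (translateSet T (-x)) (ball (0 : Pt d) (1 / ε)) =
      tilesAt (translateSet T' (-x')) (ball (0 : Pt d) (1 / ε))})

namespace SubstSystem

variable {d : ℕ} (S : SubstSystem d)

/-- Density of a family of tilings in `Ω_punc` w.r.t. the tiling metric. -/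
def DenseInPunc (E : Set (Set (Tile d))) : Prop :=
  ∀ T ∈ S.OmegaPunc, ∀ ε : ℝ, 0 < ε → ∃ T' ∈ E, tilingDist T T' < ε

/-- Openness of a subset of `Ω_punc` w.r.t. the tiling metric (subspace topology). -/
def OpenInPunc (E : Set (Set (Tile d))) : Prop :=
  E ⊆ S.OmegaPunc ∧ ∀ T ∈ E, ∃ ε : ℝ, 0 < ε ∧
    ∀ T' ∈ S.OmegaPunc, tilingDist T T' < ε → T' ∈ E

/-- The translational equivalence relation `R_punc` on `Ω_punc`. -/
def Rpunc : Set (Set (Tile d) × Set (Tile d)) :=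
  {TT | TT.1 ∈ S.OmegaPunc ∧ TT.2 ∈ S.OmegaPunc ∧ ∃ x : Pt d, TT.2 = translateSet TT.1 x}

/-- `Punc(n, p)`: the punctures of the tiles of `ω^n(p)`. -/
def Punc (n : ℕ) (p : Tile d) : Set (Pt d) :=
  {x | ∃ t ∈ S.omegan n p, S.IsPuncture t x}

/-- `E^n_p(x, y)`. -/
def Eset (n : ℕ) (p : Tile d) (x y : Pt d) : Set (Set (Tile d) × Set (Tile d)) :=
  {TT | ∃ T ∈ S.OmegaPunc, p ∈ T ∧
    TT.1 = translateSet (S.subIter n T) (-x) ∧ TT.2 = translateSet (S.subIter n T) (-y)}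

/-- `R_n`. -/
def Rn (n : ℕ) : Set (Set (Tile d) × Set (Tile d)) :=
  ⋃ p ∈ S.proto, ⋃ x ∈ S.Punc n p, ⋃ y ∈ S.Punc n p, S.Eset n p x y

/-- `R_AF = ∪ₙ R_n`. -/
def RAF : Set (Set (Tile d) × Set (Tile d)) := ⋃ n : ℕ, S.Rn n

/-- `U(P, t)`. -/
def Uset (P : Set (Tile d)) (t : Tile d) : Set (Set (Tile d)) :=
  {T ∈ S.OmegaPunc | translateSet P (-(S.punc t)) ⊆ T}

/-- `V(P, t₁, t₂)`. -/
def Vset (P : Set (Tile d)) (t₁ t₂ : Tile d) : Set (Set (Tile d) × Set (Tile d)) :=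
  {TT | TT.1 ∈ S.Uset P t₁ ∧ TT.2 = translateSet TT.1 (S.punc t₁ - S.punc t₂)}

/-- (A1) primitivity. -/
def Primitive : Prop :=
  ∃ N : ℕ, ∀ p ∈ S.proto, ∀ q ∈ S.proto, ∃ x : Pt d, Tile.translate q x ∈ S.omegan N p

/-- (A2) finite local complexity. -/
def FLC : Prop :=
  ∀ R : ℝ, 0 < R → ∃ Ps : Set (Set (Tile d)), Ps.Finite ∧
    ∀ P : Set (Tile d), IsPatch P → Metric.diam (psupp P) < R →
      (∃ T ∈ S.Omega, P ⊆ T) → ∃ P₀ ∈ Ps, ∃ x : Pt d, P = translateSet P₀ x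

/-- (A3) `ω : Ω → Ω` is bijective. -/
def SubBijective : Prop := Set.BijOn S.subSet S.Omega S.Omega

/-- (A4) `ω` forces its border. -/
def ForcesBorder : Prop :=
  ∃ n : ℕ, ∀ p ∈ S.proto, ∀ T ∈ S.Omega, ∀ T' ∈ S.Omega, ∀ x x' : Pt d,
    translateSet (S.omegan n p) x ⊆ T → translateSet (S.omegan n p) x' ⊆ T' →
    translateSet (tilesAt T ((fun y => y + x) '' psupp (S.omegan n p))) (-x) =
      translateSet (tilesAt T' ((fun y => y + x') '' psupp (S.omegan n p))) (-x')

/-- Prototile boundaries have box-counting dimension strictly less than `d`. -/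
def SmallBoundary : Prop :=
  ∃ c : ℝ, c < d ∧ ∃ K₀ : ℝ, ∀ p ∈ S.proto, ∀ ε : ℝ, 0 < ε →
    ∃ centers : Finset (Pt d), (centers.card : ℝ) ≤ K₀ * ε ^ (-c) ∧
      frontier p.carrier ⊆ ⋃ z ∈ centers, ball z ε

end SubstSystem

/-- A symmetry group action for `(𝒫, ω)`: `G ≤ O(d, ℝ)` acting on tiles, preserving
the prototile set and commuting with the substitution. -/
structure SymmAction {d : ℕ} (S : SubstSystem d) (G : Subgroup (Pt d ≃ₗᵢ[ℝ] Pt d)) where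
  act : G → Tile d → Tile d
  act_carrier : ∀ (g : G) (t : Tile d),
    (act g t).carrier = (g : Pt d ≃ₗᵢ[ℝ] Pt d) '' t.carrier
  act_one : ∀ t : Tile d, act 1 t = t
  act_mul : ∀ (g h : G) (t : Tile d), act (g * h) t = act g (act h t)
  act_proto : ∀ (g : G), ∀ p ∈ S.proto, act g p ∈ S.proto
  act_translate : ∀ (g : G) (t : Tile d) (x : Pt d),
    act g (t.translate x) = (act g t).translate ((g : Pt d ≃ₗᵢ[ℝ] Pt d) x)
  act_sub : ∀ (g : G), ∀ p ∈ S.proto, S.sub (act g p) = act g '' S.sub p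

/-- Action of a group element on a (partial) tiling: `gT = {gt : t ∈ T}`. -/
def SymmAction.actSet {d : ℕ} {S : SubstSystem d} {G : Subgroup (Pt d ≃ₗᵢ[ℝ] Pt d)}
    (σ : SymmAction S G) (g : G) (T : Set (Tile d)) : Set (Tile d) := σ.act g '' T

/-- `G` acts freely on the prototile set. -/
def SymmAction.FreeOnProto {d : ℕ} {S : SubstSystem d} {G : Subgroup (Pt d ≃ₗᵢ[ℝ] Pt d)}
    (σ : SymmAction S G) : Prop := ∀ g : G, ∀ p ∈ S.proto, σ.act g p = p → g = 1

/-- Composition of relations. -/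
def relComp {α : Type*} (R₁ R₂ : Set (α × α)) : Set (α × α) :=
  {q | ∃ z : α, (q.1, z) ∈ R₁ ∧ (z, q.2) ∈ R₂}

/-- Transpose (inverse) of a relation. -/
def relTrans {α : Type*} (R : Set (α × α)) : Set (α × α) := {q | (q.2, q.1) ∈ R}

end

section Aux

open Set

variable {d : ℕ}

lemma Tile.translate_carrier (t : Tile d) (a : Pt d) :
    (t.translate a).carrier = (fun y => y + a) '' t.carrier := rfl

lemma Tile.translate_zero (t : Tile d) : t.translate 0 = t := by
  cases t; simp [Tile.translate]

lemma Tile.translate_translate (t : Tile d) (a b : Pt d) :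
    (t.translate a).translate b = t.translate (a + b) := by
  unfold Tile.translate
  simp only [Set.image_image, add_assoc]

lemma Tile.translate_injective (a : Pt d) :
    Function.Injective (fun t : Tile d => t.translate a) := by
  intro t s h
  have := congrArg (fun u : Tile d => u.translate (-a)) h
  simpa [Tile.translate_translate, Tile.translate_zero] using this

lemma mem_translateSet {P : Set (Tile d)} {a : Pt d} {t : Tile d} :
    t ∈ translateSet P a ↔ ∃ s ∈ P, t = s.translate a := by
  simp [translateSet, eq_comm]

lemma translateSet_zero (P : Set (Tile d)) : translateSet P 0 = P := by
  simp [translateSet, Tile.translate_zero]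

lemma translateSet_translateSet (P : Set (Tile d)) (a b : Pt d) :
    translateSet (translateSet P a) b = translateSet P (a + b) := by
  simp [translateSet, Set.image_image, Tile.translate_translate]

lemma translateSet_injective (a : Pt d) :
    Function.Injective (fun P : Set (Tile d) => translateSet P a) :=
  Set.image_injective.mpr (Tile.translate_injective a)

lemma translateSet_mono {P Q : Set (Tile d)} (h : P ⊆ Q) (a : Pt d) :
    translateSet P a ⊆ translateSet Q a := Set.image_mono h

lemma translateSet_singleton (t : Tile d) (a : Pt d) :
    translateSet {t} a = {t.translate a} := by simp [translateSet]

lemma interior_image_addRight (a : Pt d) (A : Set (Pt d)) :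
    interior ((fun y => y + a) '' A) = (fun y => y + a) '' interior A := by
  have h := (Homeomorph.addRight a).image_interior A
  simpa using h.symm

lemma Tile.IsTile.translate {t : Tile d} (h : t.IsTile) (a : Pt d) :
    (t.translate a).IsTile := by
  obtain ⟨e⟩ := h
  have h1 : (t.translate a).carrier = (Homeomorph.addRight a) '' t.carrier := by
    simp [Tile.translate_carrier]
  exact ⟨(Homeomorph.setCongr h1).trans (((Homeomorph.addRight a).image t.carrier).symm.trans e)⟩

lemma psupp_translateSet (P : Set (Tile d)) (a : Pt d) :
    psupp (translateSet P a) = (fun y => y + a) '' psupp P := by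
  unfold psupp translateSet
  rw [Set.biUnion_image, Set.image_iUnion₂]
  rfl

lemma IsPartialTiling.translate {P : Set (Tile d)} (h : IsPartialTiling P) (a : Pt d) :
    IsPartialTiling (translateSet P a) := by
  constructor
  · rintro _ ⟨t, ht, rfl⟩
    exact (h.1 t ht).translate a
  · rintro _ ⟨t, ht, rfl⟩ _ ⟨t', ht', rfl⟩ hne
    have hne' : t ≠ t' := by rintro rfl; exact hne rfl
    have hinj : Function.Injective (fun y : Pt d => y + a) := fun u v huv => by
      simpa using congrArg (fun w => w + (-a)) huv
    rw [Tile.translate_carrier, Tile.translate_carrier, interior_image_addRight,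
      interior_image_addRight, ← Set.image_inter hinj, h.2 t ht t' ht' hne', Set.image_empty]

lemma IsPatch.translate {P : Set (Tile d)} (h : IsPatch P) (a : Pt d) :
    IsPatch (translateSet P a) := ⟨h.1.translate a, h.2.image _⟩

lemma IsTilingOfSpace.translate {P : Set (Tile d)} (h : IsTilingOfSpace P) (a : Pt d) :
    IsTilingOfSpace (translateSet P a) := by
  refine ⟨h.1.translate a, ?_⟩
  rw [psupp_translateSet, h.2, Set.image_univ]
  exact (Equiv.addRight a).surjective.range_eq

namespace SubstSystem

variable (S : SubstSystem d)

lemma Omega_translate {T : Set (Tile d)} (hT : T ∈ S.Omega) (a : Pt d) :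
    translateSet T a ∈ S.Omega := by
  obtain ⟨hTil, hpat⟩ := hT
  refine ⟨hTil.translate a, ?_⟩
  intro P hPsub hP
  have h1 : translateSet P (-a) ⊆ T := by
    rintro _ ⟨t, htP, rfl⟩
    obtain ⟨s, hs, rfl⟩ := mem_translateSet.mp (hPsub htP)
    simp only [Tile.translate_translate, add_neg_cancel, Tile.translate_zero]
    exact hs
  obtain ⟨m, q, hq, z, hsub⟩ := hpat _ h1 (hP.translate (-a))
  refine ⟨m, q, hq, z + a, ?_⟩
  have : P = translateSet (translateSet P (-a)) a := by
    rw [translateSet_translateSet, neg_add_cancel, translateSet_zero]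
  rw [this]
  calc translateSet (translateSet P (-a)) a
      ⊆ translateSet (translateSet (S.omegan m q) z) a := translateSet_mono hsub a
    _ = translateSet (S.omegan m q) (z + a) := translateSet_translateSet _ _ _

lemma subIter_zero (P : Set (Tile d)) : S.subIter 0 P = P := rfl

lemma subIter_succ (n : ℕ) (P : Set (Tile d)) :
    S.subIter (n + 1) P = S.subSet (S.subIter n P) := Function.iterate_succ_apply' _ _ _

lemma subSet_mono {P Q : Set (Tile d)} (h : P ⊆ Q) : S.subSet P ⊆ S.subSet Q :=
  Set.biUnion_subset_biUnion_left h

lemma subIter_mono (n : ℕ) {P Q : Set (Tile d)} (h : P ⊆ Q) :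
    S.subIter n P ⊆ S.subIter n Q := by
  induction n with
  | zero => exact h
  | succ n ih => rw [S.subIter_succ, S.subIter_succ]; exact S.subSet_mono ih

lemma subSet_translateSet (P : Set (Tile d)) (a : Pt d) :
    S.subSet (translateSet P a) = translateSet (S.subSet P) (S.lam • a) := by
  unfold subSet translateSet
  rw [Set.biUnion_image]
  rw [show (⋃ t ∈ P, S.sub (t.translate a))
      = ⋃ t ∈ P, (fun s => s.translate (S.lam • a)) '' S.sub t from
    Set.iUnion₂_congr fun t _ => S.sub_translate t a]
  rw [Set.image_iUnion₂]

lemma subIter_translateSet (n : ℕ) (P : Set (Tile d)) (a : Pt d) :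
    S.subIter n (translateSet P a) = translateSet (S.subIter n P) (S.lam ^ n • a) := by
  induction n with
  | zero => simp [subIter_zero]
  | succ n ih =>
    rw [S.subIter_succ, ih, S.subSet_translateSet, S.subIter_succ, smul_smul, ← pow_succ']

lemma subIter_mem_Omega (hA3 : S.SubBijective) (n : ℕ) {T : Set (Tile d)}
    (hT : T ∈ S.Omega) : S.subIter n T ∈ S.Omega := by
  induction n with
  | zero => exact hT
  | succ n ih => rw [S.subIter_succ]; exact hA3.mapsTo ih

lemma subIter_injOn (hA3 : S.SubBijective) (n : ℕ) :
    Set.InjOn (S.subIter n) S.Omega := by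
  induction n with
  | zero => exact fun T _ T' _ h => h
  | succ n ih =>
    intro T hT T' hT' h
    rw [S.subIter_succ, S.subIter_succ] at h
    exact ih hT hT'
      (hA3.injOn (S.subIter_mem_Omega hA3 n hT) (S.subIter_mem_Omega hA3 n hT') h)

/-- Tiles that are translates of prototiles. -/
def ProtoTrans (t : Tile d) : Prop := ∃ q ∈ S.proto, ∃ z : Pt d, t = q.translate z

lemma protoTrans_sub {t : Tile d} (h : S.ProtoTrans t) :
    ∀ s ∈ S.sub t, S.ProtoTrans s := by
  obtain ⟨q, hq, z, rfl⟩ := h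
  rw [S.sub_translate]
  rintro _ ⟨s, hs, rfl⟩
  obtain ⟨r, hr, w, rfl⟩ := S.sub_proto q hq s hs
  exact ⟨r, hr, w + S.lam • z, by simp [Tile.translate_translate]⟩

lemma protoTrans_subIter (n : ℕ) {P : Set (Tile d)} (h : ∀ t ∈ P, S.ProtoTrans t) :
    ∀ s ∈ S.subIter n P, S.ProtoTrans s := by
  induction n with
  | zero => exact h
  | succ n ih =>
    rw [S.subIter_succ]
    rintro s hs
    obtain ⟨t, ht, hst⟩ := Set.mem_iUnion₂.mp hs
    exact S.protoTrans_sub (ih t ht) s hst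

lemma smul_image_add (c : ℝ) (z : Pt d) (A : Set (Pt d)) :
    (fun y => y + c • z) '' (c • A) = c • ((fun y => y + z) '' A) := by
  rw [← Set.image_smul, ← Set.image_smul, Set.image_image, Set.image_image]
  exact Set.image_congr' (fun a => by rw [smul_add])

lemma psupp_sub_protoTrans {t : Tile d} (h : S.ProtoTrans t) :
    psupp (S.sub t) = S.lam • t.carrier := by
  obtain ⟨q, hq, z, rfl⟩ := h
  rw [show S.sub (q.translate z) = translateSet (S.sub q) (S.lam • z) from S.sub_translate q z,
    psupp_translateSet, S.sub_supp q hq, Tile.translate_carrier, smul_image_add]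

lemma psupp_biUnion (P : Set (Tile d)) (A : Tile d → Set (Tile d)) :
    psupp (⋃ t ∈ P, A t) = ⋃ t ∈ P, psupp (A t) := by
  unfold psupp
  rw [Set.biUnion_iUnion]
  exact Set.iUnion_congr fun t => by rw [Set.biUnion_iUnion]

lemma psupp_subSet_protoTrans {P : Set (Tile d)} (h : ∀ t ∈ P, S.ProtoTrans t) :
    psupp (S.subSet P) = S.lam • psupp P := by
  unfold subSet
  rw [psupp_biUnion]
  rw [show (⋃ t ∈ P, psupp (S.sub t)) = ⋃ t ∈ P, S.lam • t.carrier from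
    Set.iUnion₂_congr fun t ht => S.psupp_sub_protoTrans (h t ht)]
  unfold psupp
  rw [Set.smul_set_iUnion₂]

lemma psupp_subIter_protoTrans (n : ℕ) {P : Set (Tile d)} (h : ∀ t ∈ P, S.ProtoTrans t) :
    psupp (S.subIter n P) = S.lam ^ n • psupp P := by
  induction n with
  | zero => simp [subIter_zero]
  | succ n ih =>
    rw [S.subIter_succ, S.psupp_subSet_protoTrans (S.protoTrans_subIter n h), ih,
      smul_smul, ← pow_succ']

lemma psupp_singleton (t : Tile d) : psupp {t} = t.carrier := by simp [psupp]

lemma mem_Omega_protoTrans {T : Set (Tile d)} (hT : T ∈ S.Omega) {t : Tile d}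
    (ht : t ∈ T) : S.ProtoTrans t := by
  have hpatch : IsPatch {t} := by
    refine ⟨⟨?_, ?_⟩, Set.finite_singleton t⟩
    · intro s hs
      rw [Set.eq_of_mem_singleton hs]
      exact hT.1.1.1 t ht
    · intro s hs s' hs' hne
      exact absurd ((Set.eq_of_mem_singleton hs).trans (Set.eq_of_mem_singleton hs').symm) hne
  obtain ⟨m, q, hq, a, hsub⟩ := hT.2 {t} (Set.singleton_subset_iff.mpr ht) hpatch
  obtain ⟨s, hs, rfl⟩ := mem_translateSet.mp (hsub rfl)
  have hqT : ∀ u ∈ ({q} : Set (Tile d)), S.ProtoTrans u := by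
    intro u hu
    exact ⟨q, hq, 0, by rw [Set.eq_of_mem_singleton hu]; exact (Tile.translate_zero q).symm⟩
  obtain ⟨r, hr, w, rfl⟩ := S.protoTrans_subIter m hqT s hs
  exact ⟨r, hr, w + a, by simp [Tile.translate_translate]⟩

lemma puncture_mem_interior {q : Tile d} (hq : q ∈ S.proto) (a : Pt d) :
    a ∈ interior ((q.translate a).carrier) := by
  rw [Tile.translate_carrier, interior_image_addRight]
  exact ⟨0, S.proto_zero_mem q hq, zero_add a⟩

end SubstSystem

lemma tiles_eq_of_interior {d : ℕ} {Q : Set (Tile d)} (h : IsPartialTiling Q)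
    {t s : Tile d} (ht : t ∈ Q) (hs : s ∈ Q) {y : Pt d}
    (hy1 : y ∈ interior t.carrier) (hy2 : y ∈ interior s.carrier) : t = s := by
  by_contra hne
  have := h.2 t ht s hs hne
  exact absurd (this ▸ Set.mem_inter hy1 hy2) (Set.notMem_empty y)

end Aux

lemma SubstSystem.key {d : ℕ} (S : SubstSystem d) (hA3 : S.SubBijective) (n : ℕ)
    {p p' : Tile d} (hp : p ∈ S.proto) (hp' : p' ∈ S.proto)
    {y x' : Pt d} (hy : y ∈ S.Punc n p) (hx' : x' ∈ S.Punc n p')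
    {T T' : Set (Tile d)} (hT : T ∈ S.Omega) (hT' : T' ∈ S.Omega)
    (hpT : p ∈ T) (hp'T' : p' ∈ T')
    (heq : translateSet (S.subIter n T) (-y) = translateSet (S.subIter n T') (-x')) :
    p = p' ∧ y = x' := by
  have hlam : (0:ℝ) < S.lam := lt_trans one_pos S.one_lt_lam
  have hln : (S.lam ^ n) ≠ 0 := (pow_pos hlam n).ne'
  set v : Pt d := x' - y with hv
  set μ : Pt d := (S.lam ^ n)⁻¹ • v with hμ
  have hlv : S.lam ^ n • μ = v := smul_inv_smul₀ hln v
  have h1 : S.subIter n T' = translateSet (S.subIter n T) v := by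
    have h := congrArg (fun Q => translateSet Q x') heq
    simp only [translateSet_translateSet, neg_add_cancel, translateSet_zero] at h
    rw [← h]
    congr 1
    rw [hv]; abel
  have h2 : S.subIter n (translateSet T μ) = S.subIter n T' := by
    rw [S.subIter_translateSet, hlv, h1]
  have hTμ : translateSet T μ ∈ S.Omega := S.Omega_translate hT μ
  have hTT : T' = translateSet T μ := (S.subIter_injOn hA3 n hTμ hT' h2).symm
  have hp'mem : p' ∈ translateSet T μ := hTT ▸ hp'T'
  obtain ⟨t, htT, hteq⟩ := mem_translateSet.mp hp'mem
  obtain ⟨q, hq, w, htq⟩ := S.mem_Omega_protoTrans hT htT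
  rw [htq, Tile.translate_translate] at hteq
  obtain ⟨hqp', hw⟩ := S.proto_no_translate q hq p' hp' (w + μ) hteq
  have htp' : t = p'.translate (-μ) := by
    rw [htq, hqp', eq_neg_of_add_eq_zero_left hw]
  -- the two tiles with puncture y
  obtain ⟨s1, hs1mem, q1, hq1, hs1⟩ := hy
  obtain ⟨s2', hs2mem', q2, hq2, hs2'⟩ := hx'
  set s2 : Tile d := s2'.translate (-v) with hs2def
  have hs2t : s2 ∈ S.subIter n ({t} : Set (Tile d)) := by
    rw [htp', show ({p'.translate (-μ)} : Set (Tile d)) = translateSet {p'} (-μ) from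
      (translateSet_singleton p' (-μ)).symm, S.subIter_translateSet, smul_neg, hlv]
    exact mem_translateSet.mpr ⟨s2', hs2mem', rfl⟩
  have hs1T : s1 ∈ S.subIter n T :=
    S.subIter_mono n (Set.singleton_subset_iff.mpr hpT) hs1mem
  have hs2T : s2 ∈ S.subIter n T :=
    S.subIter_mono n (Set.singleton_subset_iff.mpr htT) hs2t
  have hΩn : S.subIter n T ∈ S.Omega := S.subIter_mem_Omega hA3 n hT
  have hy1 : y ∈ interior s1.carrier := by
    rw [hs1]; exact S.puncture_mem_interior hq1 y
  have hs2y : s2 = q2.translate y := by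
    rw [hs2def, hs2', Tile.translate_translate]
    congr 1
    rw [hv]; abel
  have hy2 : y ∈ interior s2.carrier := by
    rw [hs2y]; exact S.puncture_mem_interior hq2 y
  have hs12 : s1 = s2 := tiles_eq_of_interior hΩn.1.1 hs1T hs2T hy1 hy2
  -- p = t
  have hsupp : ∀ u : Tile d, u ∈ T → S.ProtoTrans u → ∀ s ∈ S.subIter n ({u} : Set (Tile d)),
      y ∈ interior s.carrier → (S.lam ^ n)⁻¹ • y ∈ interior u.carrier := by
    intro u huT hupt s hsmem hys
    have hsub : s.carrier ⊆ psupp (S.subIter n ({u} : Set (Tile d))) :=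
      Set.subset_biUnion_of_mem hsmem
    have hps : psupp (S.subIter n ({u} : Set (Tile d))) = S.lam ^ n • u.carrier := by
      rw [S.psupp_subIter_protoTrans n (by rintro _ rfl; exact hupt), psupp_singleton]
    have : y ∈ interior (S.lam ^ n • u.carrier) :=
      interior_mono (hps ▸ hsub) hys
    rw [interior_smul₀ hln] at this
    exact (Set.mem_smul_set_iff_inv_smul_mem₀ hln _ _).mp this
  have hpt : p = t := by
    by_contra hne
    have hdisj := hT.1.1.2 p hpT t htT hne
    have m1 : (S.lam ^ n)⁻¹ • y ∈ interior p.carrier :=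
      hsupp p hpT ⟨p, hp, 0, (Tile.translate_zero p).symm⟩ s1 hs1mem hy1
    have m2 : (S.lam ^ n)⁻¹ • y ∈ interior t.carrier :=
      hsupp t htT ⟨q, hq, w, htq⟩ s2 hs2t hy2
    exact absurd (hdisj ▸ Set.mem_inter m1 m2) (Set.notMem_empty _)
  have hfinal := S.proto_no_translate p' hp' p hp (-μ) (hpt.trans htp')
  have hμ0 : μ = 0 := by simpa using hfinal.2
  have hv0 : v = 0 := by rw [← hlv, hμ0, smul_zero]
  exact ⟨hfinal.1.symm, (sub_eq_zero.mp hv0).symm⟩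
/-- Composition rules for the graphs `E^n_p(x, y)`:
`E^n_p(x,y) ∘ E^n_{p'}(x',y')` is empty if `p ≠ p'`, empty if `p = p'` and `y ≠ x'`,
and equals `E^n_p(x, y')` if `p = p'` and `y = x'`; the transpose of `E^n_p(x,y)` is
`E^n_p(y,x)`. -/
theorem stmt16 {d : ℕ} (hd : 1 ≤ d) (S : SubstSystem d)
    (hA1 : S.Primitive) (hA2 : S.FLC) (hA3 : S.SubBijective)
    (n : ℕ) (p : Tile d) (hp : p ∈ S.proto) (p' : Tile d) (hp' : p' ∈ S.proto)
    (x : Pt d) (hx : x ∈ S.Punc n p) (y : Pt d) (hy : y ∈ S.Punc n p)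
    (x' : Pt d) (hx' : x' ∈ S.Punc n p') (y' : Pt d) (hy' : y' ∈ S.Punc n p') :
    (p ≠ p' → relComp (S.Eset n p x y) (S.Eset n p' x' y') = ∅) ∧
    (p = p' → y ≠ x' → relComp (S.Eset n p x y) (S.Eset n p' x' y') = ∅) ∧
    (p = p' → y = x' → relComp (S.Eset n p x y) (S.Eset n p' x' y') = S.Eset n p x y') ∧
    relTrans (S.Eset n p x y) = S.Eset n p y x := by
  have hkey : ∀ TT ∈ relComp (S.Eset n p x y) (S.Eset n p' x' y'), p = p' ∧ y = x' := by
    rintro TT ⟨z, ⟨T, hTp, hpT, h11, h12⟩, ⟨T', hT'p, hp'T', h21, h22⟩⟩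
    exact S.key hA3 n hp hp' hy hx' hTp.1 hT'p.1 hpT hp'T' (h12.symm.trans h21)
  refine ⟨?_, ?_, ?_, ?_⟩
  · intro hne
    ext TT
    simp only [Set.mem_empty_iff_false, iff_false]
    intro hmem
    exact hne (hkey TT hmem).1
  · intro _ hne
    ext TT
    simp only [Set.mem_empty_iff_false, iff_false]
    intro hmem
    exact hne (hkey TT hmem).2
  · intro hpp hyx
    subst hpp
    subst hyx
    ext TT
    constructor
    · rintro ⟨z, ⟨T, hTp, hpT, h11, h12⟩, ⟨T', hT'p, hp'T', h21, h22⟩⟩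
      have hsub : S.subIter n T = S.subIter n T' :=
        translateSet_injective (-y) (h12.symm.trans h21)
      have hTT : T = T' := S.subIter_injOn hA3 n hTp.1 hT'p.1 hsub
      exact ⟨T, hTp, hpT, h11, hTT ▸ h22⟩
    · rintro ⟨T, hTp, hpT, h1, h2⟩
      exact ⟨translateSet (S.subIter n T) (-y), ⟨T, hTp, hpT, h1, rfl⟩,
        ⟨T, hTp, hpT, rfl, h2⟩⟩
  · ext TT
    constructor
    · rintro ⟨T, hTp, hpT, h1, h2⟩
      exact ⟨T, hTp, hpT, h2, h1⟩
    · rintro ⟨T, hTp, hpT, h1, h2⟩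
      exact ⟨T, hTp, hpT, h2, h1⟩
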